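/- Let R be a field, x ∈ X, and let φ : ℙ_{[x]} → ℙ_{[x]} be an R-linear map commuting with all operators P_{Z_μ} and S_c S_d* (c, d, μ finite words in the language). Then φ is a scalar multiple of the identity. Consequently, the commutant algebra of the representation on ℙ_{[x]} is isomorphic to R. -/

import Mathlib

/-- The iterated shift: `shiftN x n = σⁿ(x)`. -/
def shiftN {A : Type*} (x : ℕ → A) (n : ℕ) : ℕ → A := fun k => x (k + n)

/-- Tail equivalence: `x ∼ y` iff `σⁿ(x) = σᵐ(y)` for some `n, m ∈ ℕ`. -/
def tailEq {A : Type*} (x y : ℕ → A) : Prop := ∃ n m : ℕ, shiftN x n = shiftN y m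

/-- Concatenation of a finite word with an infinite sequence. -/
def wcat {A : Type*} (w : List A) (x : ℕ → A) : ℕ → A :=
  fun n => if h : n < w.length then w.get ⟨n, h⟩ else x (n - w.length)

/-- The language of `X`: finite words appearing in some element of `X`. -/
def inLang {A : Type*} (X : Set (ℕ → A)) (w : List A) : Prop :=
  ∃ x ∈ X, ∃ k : ℕ, ∀ i (h : i < w.length), w.get ⟨i, h⟩ = x (k + i)

/-- The periodic infinite word `w^∞`. -/
def perInf {A : Type*} (w : List A) (h : w ≠ []) : ℕ → A :=
  fun n => w.get ⟨n % w.length, Nat.mod_lt n (List.length_pos_iff.mpr h)⟩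

/-- `q` is a line path in `X`. -/
def IsLinePath {A : Type*} (X : Set (ℕ → A)) (q : ℕ → A) : Prop :=
  q ∈ X ∧ {x | x ∈ X ∧ x 0 = q 0} = {q} ∧
    ∀ (β : List A) (hβ : β ≠ []) (k : ℕ), shiftN q k ≠ perInf β hβ


variable {A : Type*} (R : Type*) [Field R] (X : Set (ℕ → A))

open Classical

/-- Projection `P_B(δ_x) = [x ∈ B] δ_x` on the free module on `X`. -/
noncomputable def Pop (B : Set (ℕ → A)) : (↥X →₀ R) →ₗ[R] (↥X →₀ R) :=
  Finsupp.lsum R fun x => if (x : ℕ → A) ∈ B then Finsupp.lsingle x else 0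

/-- `S_a(δ_x) = [ax ∈ X] δ_{ax}`. -/
noncomputable def Sop (a : A) : (↥X →₀ R) →ₗ[R] (↥X →₀ R) :=
  Finsupp.lsum R fun x =>
    if h : wcat [a] (x : ℕ → A) ∈ X then Finsupp.lsingle (⟨wcat [a] (x : ℕ → A), h⟩ : ↥X) else 0

/-- `S_a^*(δ_x) = [x₀ = a] δ_{σ(x)}`, needing shift invariance of `X`. -/
noncomputable def SstarOp (hX : ∀ x ∈ X, shiftN x 1 ∈ X) (a : A) :
    (↥X →₀ R) →ₗ[R] (↥X →₀ R) :=
  Finsupp.lsum R fun x =>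
    if (x : ℕ → A) 0 = a then
      Finsupp.lsingle (⟨shiftN (x : ℕ → A) 1, hX x x.2⟩ : ↥X) else 0

/-- `S_α = S_{α₁} ∘ ⋯ ∘ S_{αₙ}`. -/
noncomputable def SwordOp (β : List A) : (↥X →₀ R) →ₗ[R] (↥X →₀ R) :=
  (β.map (Sop R X)).foldr (· ∘ₗ ·) LinearMap.id

/-- `S_α^* = S_{αₙ}^* ∘ ⋯ ∘ S_{α₁}^*`. -/
noncomputable def SstarWordOp (hX : ∀ x ∈ X, shiftN x 1 ∈ X) (α : List A) :
    (↥X →₀ R) →ₗ[R] (↥X →₀ R) :=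
  (α.map (SstarOp R X hX)).foldl (fun acc f => f ∘ₗ acc) LinearMap.id

/-- `C(α,β) = {βx ∈ X : αx ∈ X}`. -/
def Cset (α β : List A) : Set (ℕ → A) :=
  {y | ∃ x : ℕ → A, y = wcat β x ∧ wcat β x ∈ X ∧ wcat α x ∈ X}

/-- The cylinder `Z_μ`. -/
def Zcyl (μ : List A) : Set (ℕ → A) := {y | y ∈ X ∧ ∃ x : ℕ → A, y = wcat μ x}

/-- `ℙ_{[x]}`: the submodule spanned by `{δ_y : y ∼ x}`. -/
noncomputable def Pclass (x : ℕ → A) : Submodule R (↥X →₀ R) :=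
  Submodule.span R {f | ∃ y : ↥X, tailEq (y : ℕ → A) x ∧ f = Finsupp.single y (1 : R)}



section Aux

variable {A : Type*}

def pref (y : ℕ → A) (n : ℕ) : List A := List.ofFn (fun i : Fin n => y i)

lemma shiftN_zero (y : ℕ → A) : shiftN y 0 = y := by funext k; simp [shiftN]

lemma shiftN_shift (y : ℕ → A) (n : ℕ) :
    shiftN (shiftN y 1) n = shiftN y (n+1) := by
  funext k; simp [shiftN]; ring_nf

lemma pref_succ (y : ℕ → A) (n : ℕ) :
    pref y (n+1) = y 0 :: pref (shiftN y 1) n := by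
  simp [pref, List.ofFn_succ, shiftN]

lemma wcat_pref (y : ℕ → A) (n : ℕ) : wcat (pref y n) (shiftN y n) = y := by
  funext k
  unfold wcat pref shiftN
  by_cases h : k < n
  · simp [h, List.get_ofFn]
  · simp only [List.length_ofFn, h, dif_neg, not_false_iff]
    rw [Nat.sub_add_cancel (le_of_not_gt h)]

lemma wcat_one (y : ℕ → A) : wcat [y 0] (shiftN y 1) = y := by
  have := wcat_pref y 1
  simpa [pref] using this

lemma wcat_pref_agree {y z w : ℕ → A} {n k : ℕ} (hk : k < n)
    (h : z = wcat (pref y n) w) : z k = y k := by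
  subst h
  unfold wcat pref
  simp [hk, List.get_ofFn]

variable {X : Set (ℕ → A)}

lemma shift_mem (hX : ∀ x ∈ X, shiftN x 1 ∈ X) {y : ℕ → A} (hy : y ∈ X) (n : ℕ) :
    shiftN y n ∈ X := by
  induction n with
  | zero => rwa [shiftN_zero]
  | succ n ih =>
      have := hX _ ih
      have h2 : shiftN (shiftN y n) 1 = shiftN y (n+1) := by
        funext k; simp [shiftN]; ring_nf
      rwa [h2] at this

lemma mem_Zcyl_pref {y : ℕ → A} (hy : y ∈ X) (n : ℕ) : y ∈ Zcyl X (pref y n) :=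
  ⟨hy, shiftN y n, (wcat_pref y n).symm⟩

variable (R : Type*) [Field R]

lemma Pop_single (B : Set (ℕ → A)) (y : ↥X) (r : R) :
    Pop R X B (Finsupp.single y r)
      = if (y : ℕ → A) ∈ B then Finsupp.single y r else 0 := by
  unfold Pop
  rw [Finsupp.lsum_single]
  split_ifs <;> simp

lemma Pop_apply_not_mem (B : Set (ℕ → A)) (f : ↥X →₀ R) (z : ↥X)
    (hz : (z : ℕ → A) ∉ B) : Pop R X B f z = 0 := by
  unfold Pop
  rw [Finsupp.lsum_apply, Finsupp.sum_apply]
  unfold Finsupp.sum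
  apply Finset.sum_eq_zero
  intro a _
  by_cases hab : (a : ℕ → A) ∈ B
  · simp only [if_pos hab]
    rcases eq_or_ne a z with rfl | hne
    · exact absurd hab hz
    · simp [Finsupp.single_apply, hne]
  · simp [if_neg hab]

lemma Sop_single (a : A) (y : ↥X) (h : wcat [a] (y : ℕ → A) ∈ X) (r : R) :
    Sop R X a (Finsupp.single y r)
      = Finsupp.single (⟨wcat [a] (y : ℕ → A), h⟩ : ↥X) r := by
  unfold Sop
  rw [Finsupp.lsum_single, dif_pos h]
  rfl

lemma SstarOp_single (hX : ∀ x ∈ X, shiftN x 1 ∈ X) (a : A) (y : ↥X)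
    (h : (y : ℕ → A) 0 = a) (r : R) :
    SstarOp R X hX a (Finsupp.single y r)
      = Finsupp.single (⟨shiftN (y : ℕ → A) 1, hX y y.2⟩ : ↥X) r := by
  unfold SstarOp
  rw [Finsupp.lsum_single, if_pos h]
  rfl

lemma SwordOp_cons (a : A) (c : List A) :
    SwordOp R X (a :: c) = Sop R X a ∘ₗ SwordOp R X c := rfl

lemma foldl_comp_aux {M : Type*} [AddCommMonoid M] [Module R M]
    (l : List (M →ₗ[R] M)) (g : M →ₗ[R] M) :
    l.foldl (fun acc f => f ∘ₗ acc) g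
      = (l.foldl (fun acc f => f ∘ₗ acc) LinearMap.id) ∘ₗ g := by
  induction l generalizing g with
  | nil => simp
  | cons a l ih =>
      simp only [List.foldl_cons]
      rw [ih (a ∘ₗ g), ih (a ∘ₗ LinearMap.id)]
      simp [LinearMap.comp_assoc]

lemma SstarWordOp_cons (hX : ∀ x ∈ X, shiftN x 1 ∈ X) (a : A) (d : List A) :
    SstarWordOp R X hX (a :: d) = SstarWordOp R X hX d ∘ₗ SstarOp R X hX a := by
  unfold SstarWordOp
  simp only [List.map_cons, List.foldl_cons]
  rw [foldl_comp_aux]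
  simp

lemma single_eq_single {y z : ℕ → A} (hy : y ∈ X) (hz : z ∈ X) (h : y = z) (r : R) :
    Finsupp.single (⟨y, hy⟩ : ↥X) r = Finsupp.single (⟨z, hz⟩ : ↥X) r := by
  subst h; rfl

lemma Sword_pref (hX : ∀ x ∈ X, shiftN x 1 ∈ X) (n : ℕ) (y : ℕ → A) (hy : y ∈ X) :
    SwordOp R X (pref y n)
        (Finsupp.single (⟨shiftN y n, shift_mem hX hy n⟩ : ↥X) (1 : R))
      = Finsupp.single (⟨y, hy⟩ : ↥X) (1 : R) := by
  induction n generalizing y with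
  | zero =>
      have : SwordOp R X (pref y 0) = LinearMap.id := rfl
      rw [this]
      exact single_eq_single R _ hy (shiftN_zero y) 1
  | succ n ih =>
      rw [pref_succ, SwordOp_cons, LinearMap.comp_apply]
      have hsy : shiftN y 1 ∈ X := hX y hy
      have h1 : Finsupp.single (⟨shiftN y (n+1), shift_mem hX hy (n+1)⟩ : ↥X) (1 : R)
          = Finsupp.single (⟨shiftN (shiftN y 1) n, shift_mem hX hsy n⟩ : ↥X) (1 : R) :=
        single_eq_single R _ _ (shiftN_shift y n).symm 1
      rw [h1, ih (shiftN y 1) hsy]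
      have hw : wcat [y 0] ((⟨shiftN y 1, hsy⟩ : ↥X) : ℕ → A) ∈ X := by
        simpa [wcat_one y] using hy
      rw [Sop_single R (y 0) _ hw]
      exact single_eq_single R _ _ (wcat_one y) 1

lemma SstarWord_pref (hX : ∀ x ∈ X, shiftN x 1 ∈ X) (m : ℕ) (y : ℕ → A) (hy : y ∈ X) :
    SstarWordOp R X hX (pref y m) (Finsupp.single (⟨y, hy⟩ : ↥X) (1 : R))
      = Finsupp.single (⟨shiftN y m, shift_mem hX hy m⟩ : ↥X) (1 : R) := by
  induction m generalizing y with
  | zero =>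
      have : SstarWordOp R X hX (pref y 0) = LinearMap.id := rfl
      rw [this]
      exact single_eq_single R hy _ (shiftN_zero y).symm 1
  | succ m ih =>
      rw [pref_succ, SstarWordOp_cons, LinearMap.comp_apply]
      have hsy : shiftN y 1 ∈ X := hX y hy
      rw [SstarOp_single R hX (y 0) ⟨y, hy⟩ rfl 1]
      have h1 : Finsupp.single (⟨shiftN ((⟨y, hy⟩ : ↥X) : ℕ → A) 1, hX _ hy⟩ : ↥X) (1 : R)
          = Finsupp.single (⟨shiftN y 1, hsy⟩ : ↥X) (1 : R) := rfl
      rw [h1, ih (shiftN y 1) hsy]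
      exact single_eq_single R _ _ (shiftN_shift y m) 1

end Aux

/-- over a field, any linear endomorphism of `ℙ_{[x]}` commuting
with all `P_{Z_μ}` and all `S_c S_d^*` is a scalar multiple of the identity
(hence the commutant is isomorphic to `R`). -/
theorem Pclass_commutant_scalar {A : Type*} (R : Type*) [Field R]
    (X : Set (ℕ → A)) (hX : ∀ x ∈ X, shiftN x 1 ∈ X) (x : ℕ → A) (hx : x ∈ X)
    (φ : (↥X →₀ R) →ₗ[R] (↥X →₀ R))
    (hφmap : ∀ v ∈ Pclass R X x, φ v ∈ Pclass R X x)
    (hφP : ∀ μ : List A, ∀ v ∈ Pclass R X x,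
      φ (Pop R X (Zcyl X μ) v) = Pop R X (Zcyl X μ) (φ v))
    (hφS : ∀ c d : List A, ∀ v ∈ Pclass R X x,
      φ ((SwordOp R X c ∘ₗ SstarWordOp R X hX d) v)
        = (SwordOp R X c ∘ₗ SstarWordOp R X hX d) (φ v)) :
    ∃ γ : R, ∀ v ∈ Pclass R X x, φ v = γ • v := by
  classical
  have hxx : tailEq x x := ⟨0, 0, rfl⟩
  have hδx_mem : (Finsupp.single (⟨x, hx⟩ : ↥X) (1:R)) ∈ Pclass R X x :=
    Submodule.subset_span ⟨⟨x, hx⟩, hxx, rfl⟩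
  set γ : R := (φ (Finsupp.single (⟨x, hx⟩ : ↥X) 1)) ⟨x, hx⟩ with hγ
  have heig : φ (Finsupp.single (⟨x, hx⟩ : ↥X) 1)
      = γ • Finsupp.single (⟨x, hx⟩ : ↥X) 1 := by
    ext z
    rcases eq_or_ne z (⟨x, hx⟩ : ↥X) with rfl | hzx
    · simp [hγ]
    · have hfun : (z : ℕ → A) ≠ x := fun h => hzx (Subtype.ext h)
      obtain ⟨k, hk⟩ := Function.ne_iff.mp hfun
      have hyZ : x ∈ Zcyl X (pref x (k+1)) := mem_Zcyl_pref hx (k+1)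
      have hcomm := hφP (pref x (k+1)) _ hδx_mem
      rw [Pop_single, if_pos hyZ] at hcomm
      have hzZ : (z : ℕ → A) ∉ Zcyl X (pref x (k+1)) := by
        rintro ⟨_, w, hw⟩
        exact hk (wcat_pref_agree (Nat.lt_succ_self k) hw)
      calc (φ (Finsupp.single (⟨x, hx⟩ : ↥X) 1)) z
          = (Pop R X (Zcyl X (pref x (k+1)))
              (φ (Finsupp.single (⟨x, hx⟩ : ↥X) 1))) z := by rw [← hcomm]
        _ = 0 := Pop_apply_not_mem _ _ _ _ hzZ
        _ = (γ • Finsupp.single (⟨x, hx⟩ : ↥X) (1:R)) z := by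
              simp [Finsupp.single_eq_of_ne' (Ne.symm hzx)]
  have htrans : ∀ (y : ↥X), tailEq (y : ℕ → A) x →
      φ (Finsupp.single y 1) = γ • Finsupp.single y 1 := by
    rintro ⟨y, hy⟩ ⟨n, m, hnm⟩
    have hS := hφS (pref y n) (pref x m) _ hδx_mem
    have hstar := SstarWord_pref R hX m x hx
    have heq1 : Finsupp.single (⟨shiftN x m, shift_mem hX hx m⟩ : ↥X) (1:R)
        = Finsupp.single (⟨shiftN y n, shift_mem hX hy n⟩ : ↥X) (1:R) :=
      single_eq_single R _ _ hnm.symm 1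
    have hword := Sword_pref R hX n y hy
    have hcomp : (SwordOp R X (pref y n) ∘ₗ SstarWordOp R X hX (pref x m))
        (Finsupp.single (⟨x, hx⟩ : ↥X) 1)
        = Finsupp.single (⟨y, hy⟩ : ↥X) 1 := by
      rw [LinearMap.comp_apply, hstar, heq1, hword]
    rw [hcomp] at hS
    rw [hS, heig, map_smul, hcomp]
  refine ⟨γ, ?_⟩
  intro v hv
  induction hv using Submodule.span_induction with
  | mem f hf =>
      obtain ⟨y, hty, rfl⟩ := hf
      exact htrans y hty
  | zero => simp
  | add f g _ _ hf hg => rw [map_add, hf, hg, smul_add]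
  | smul r f _ hf => rw [map_smul, hf, smul_comm]
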